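/- Let X be a nonempty compact subset of ℂ. The map x ↦ χ_x, where χ_x(u) = u(x) for u ∈ R(X), is a homeomorphism from X onto the character space of R(X) (the set of nonzero continuous algebra homomorphisms R(X) → ℂ, equipped with the weak-* topology inherited from the dual of R(X)). -/

import Mathlib

/-- The set of restrictions to `X` of rational functions with poles off `X`. -/
def rationalFunctionsOn (X : Set ℂ) : Set C(X, ℂ) :=
  {u | ∃ p q : Polynomial ℂ, (∀ z ∈ X, q.eval z ≠ 0) ∧
    ∀ z : X, u z = p.eval (z : ℂ) / q.eval (z : ℂ)}

/-- `R(X)`: the closure in `C(X, ℂ)` (sup norm) of the algebra of rational functions with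
poles off `X`. -/
noncomputable def RX (X : Set ℂ) [CompactSpace X] : Subalgebra ℂ C(X, ℂ) :=
  (Algebra.adjoin ℂ (rationalFunctionsOn X)).topologicalClosure

namespace RXaux

variable (X : Set ℂ) [CompactSpace X]

instance : CompleteSpace (RX X) :=
  (Subalgebra.isClosed_topologicalClosure _).completeSpace_coe

/-- The continuous map `z ↦ q.eval z` on `X`. -/
noncomputable def polyMap (q : Polynomial ℂ) : C(X, ℂ) :=
  ⟨fun z => q.eval (z : ℂ), (q.continuous_aeval).comp continuous_subtype_val⟩

theorem polyMap_mem_rat (q : Polynomial ℂ) : polyMap X q ∈ rationalFunctionsOn X := by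
  refine ⟨q, 1, fun z _ => by simp, fun z => by simp [polyMap]; rfl⟩

theorem rat_subset_RX : rationalFunctionsOn X ⊆ (RX X : Set C(X, ℂ)) :=
  fun _ hu => (Subalgebra.le_topologicalClosure _) (Algebra.subset_adjoin hu)

theorem polyMap_mem (q : Polynomial ℂ) : polyMap X q ∈ RX X :=
  rat_subset_RX X (polyMap_mem_rat X q)

/-- The identity map as an element of `RX X`. -/
noncomputable def ZA : RX X := ⟨polyMap X Polynomial.X, polyMap_mem X Polynomial.X⟩

theorem aeval_ZA (q : Polynomial ℂ) :
    Polynomial.aeval (ZA X) q = (⟨polyMap X q, polyMap_mem X q⟩ : RX X) := by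
  apply Subtype.ext
  have h1 : ((Polynomial.aeval (ZA X) q : RX X) : C(X, ℂ)) =
      Polynomial.aeval ((ZA X : C(X, ℂ))) q :=
    (Polynomial.aeval_algHom_apply (RX X).val (ZA X) q).symm
  rw [h1]
  ext z
  have h2 : (Polynomial.aeval ((ZA X : C(X, ℂ))) q) z =
      Polynomial.aeval (((ZA X : C(X, ℂ))) z) q :=
    (Polynomial.aeval_algHom_apply (ContinuousMap.evalAlgHom ℂ ℂ z) _ q).symm
  rw [h2]
  simp [ZA, polyMap]; rfl

/-- Any algebra homomorphism `RX X → ℂ` evaluates `ZA` to a point of `X`. -/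
theorem lambda_mem (χ : RX X →ₐ[ℂ] ℂ) : χ (ZA X) ∈ X := by
  by_contra hlam
  set lam := χ (ZA X) with hl
  set q : Polynomial ℂ := Polynomial.X - Polynomial.C lam with hq
  have hqne : ∀ z ∈ X, q.eval z ≠ 0 := by
    intro z hz
    simp only [hq, Polynomial.eval_sub, Polynomial.eval_X, Polynomial.eval_C, sub_ne_zero]
    rintro rfl; exact hlam hz
  -- the inverse of q on X
  have hcont : Continuous fun z : X => (q.eval (z : ℂ))⁻¹ := by
    have : Continuous fun z : X => q.eval (z : ℂ) :=
      (q.continuous_aeval).comp continuous_subtype_val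
    exact this.inv₀ fun z => hqne z z.2
  set u : C(X, ℂ) := ⟨fun z => (q.eval (z : ℂ))⁻¹, hcont⟩ with hu
  have humem : u ∈ RX X := by
    refine rat_subset_RX X ⟨1, q, hqne, fun z => ?_⟩
    simp [hu, one_div]
  have hmul : (⟨polyMap X q, polyMap_mem X q⟩ : RX X) * ⟨u, humem⟩ = 1 := by
    apply Subtype.ext
    ext z
    exact mul_inv_cancel₀ (hqne z z.2)
  have h1 : χ ⟨polyMap X q, polyMap_mem X q⟩ * χ ⟨u, humem⟩ = 1 := by
    rw [← map_mul, hmul, map_one]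
  have h0 : χ ⟨polyMap X q, polyMap_mem X q⟩ = 0 := by
    rw [← aeval_ZA]
    rw [show χ (Polynomial.aeval (ZA X) q) = Polynomial.aeval (χ (ZA X)) q from
      (Polynomial.aeval_algHom_apply χ (ZA X) q).symm]
    simp [hq, ← hl]
  rw [h0, zero_mul] at h1
  exact zero_ne_one h1

end RXaux

set_option maxHeartbeats 1000000 in
/-- For a nonempty compact `X ⊆ ℂ`, evaluation `x ↦ χ_x`, `χ_x(u) = u(x)`, is a homeomorphism
of `X` onto the character space of `R(X)` (nonzero continuous multiplicative linear functionals,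
with the weak-* topology). -/
theorem evaluation_homeomorphism_characterSpace_RX
    (X : Set ℂ) [CompactSpace X] (hX : X.Nonempty) :
    ∃ h : X ≃ₜ WeakDual.characterSpace ℂ (RX X),
      ∀ (x : X) (u : RX X), (h x : WeakDual ℂ (RX X)) u = (u : C(X, ℂ)) x := by
  classical
  -- the evaluation character at `x`
  let evh : X → (RX X →ₐ[ℂ] ℂ) := fun x => (ContinuousMap.evalAlgHom ℂ ℂ x).comp (RX X).val
  let ε : X → WeakDual.characterSpace ℂ (RX X) := fun x =>
    WeakDual.CharacterSpace.equivAlgHom.symm (evh x)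
  have hε_apply : ∀ (x : X) (u : RX X), (ε x : WeakDual ℂ (RX X)) u = (u : C(X, ℂ)) x :=
    fun x u => rfl
  -- injectivity
  have hinj : Function.Injective ε := by
    intro x y hxy
    have := congrArg (fun φ : WeakDual.characterSpace ℂ (RX X) =>
      (φ : WeakDual ℂ (RX X)) (RXaux.ZA X)) hxy
    exact Subtype.ext (by simpa [hε_apply, RXaux.ZA, RXaux.polyMap] using this)
  -- surjectivity
  have hsurj : Function.Surjective ε := by
    intro φ
    set χ : RX X →ₐ[ℂ] ℂ := WeakDual.CharacterSpace.equivAlgHom φ with hχ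
    have hχc : Continuous χ := by
      have : Continuous (φ : WeakDual ℂ (RX X)) := (φ : WeakDual ℂ (RX X)).continuous
      exact this
    set x : X := ⟨χ (RXaux.ZA X), RXaux.lambda_mem X χ⟩ with hx
    refine ⟨x, ?_⟩
    apply WeakDual.CharacterSpace.equivAlgHom.injective
    rw [Equiv.apply_symm_apply]
    -- show evh x = χ
    -- first, they agree on rational functions
    have hgen : ∀ a : RX X, (a : C(X, ℂ)) ∈ rationalFunctionsOn X → evh x a = χ a := by
      rintro ⟨u, hmem⟩ ⟨p, q, hq, huz⟩
      have hmul : (⟨u, hmem⟩ : RX X) * ⟨RXaux.polyMap X q, RXaux.polyMap_mem X q⟩ =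
          ⟨RXaux.polyMap X p, RXaux.polyMap_mem X p⟩ := by
        apply Subtype.ext
        ext z
        show u z * q.eval (z : ℂ) = p.eval (z : ℂ)
        rw [huz z]
        exact div_mul_cancel₀ _ (hq z z.2)
      have hχpoly : ∀ r : Polynomial ℂ,
          χ ⟨RXaux.polyMap X r, RXaux.polyMap_mem X r⟩ = r.eval (χ (RXaux.ZA X)) := by
        intro r
        rw [← RXaux.aeval_ZA]
        rw [show χ (Polynomial.aeval (RXaux.ZA X) r) = Polynomial.aeval (χ (RXaux.ZA X)) r from
          (Polynomial.aeval_algHom_apply χ (RXaux.ZA X) r).symm]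
        simp
      have h1 : χ ⟨u, hmem⟩ * q.eval (χ (RXaux.ZA X)) = p.eval (χ (RXaux.ZA X)) := by
        rw [← hχpoly q, ← hχpoly p, ← map_mul, hmul]
      have hqx : q.eval (χ (RXaux.ZA X)) ≠ 0 := hq _ (RXaux.lambda_mem X χ)
      have h2 : χ ⟨u, hmem⟩ = p.eval (χ (RXaux.ZA X)) / q.eval (χ (RXaux.ZA X)) :=
        (eq_div_iff hqx).2 h1
      have h3 : evh x ⟨u, hmem⟩ = u x := rfl
      rw [h2, h3, huz x]
    -- they agree on the adjoin
    have hadj : ∀ a : RX X, (a : C(X, ℂ)) ∈ Algebra.adjoin ℂ (rationalFunctionsOn X) →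
        evh x a = χ a := by
      intro a ha
      have hle : Algebra.adjoin ℂ (rationalFunctionsOn X) ≤
          (AlgHom.equalizer (evh x) χ).map (RX X).val := by
        apply Algebra.adjoin_le
        intro u hu
        exact ⟨⟨u, RXaux.rat_subset_RX X hu⟩, hgen _ hu, rfl⟩
      obtain ⟨b, hb, hba⟩ := hle ha
      have : b = a := Subtype.ext hba
      rwa [this] at hb
    -- continuity + density
    have hclosed : IsClosed {a : RX X | evh x a = χ a} := by
      have hevc : Continuous (evh x) := by
        exact (continuous_eval_const x).comp continuous_subtype_val
      exact isClosed_eq hevc hχc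
    have hdense : ∀ a : RX X, a ∈ closure {a : RX X |
        (a : C(X, ℂ)) ∈ Algebra.adjoin ℂ (rationalFunctionsOn X)} := by
      intro a
      rw [closure_subtype]
      have himg : Subtype.val '' {a : RX X |
          (a : C(X, ℂ)) ∈ Algebra.adjoin ℂ (rationalFunctionsOn X)} =
          (Algebra.adjoin ℂ (rationalFunctionsOn X) : Set C(X, ℂ)) := by
        ext u
        constructor
        · rintro ⟨b, hb, rfl⟩; exact hb
        · intro hu
          exact ⟨⟨u, (Subalgebra.le_topologicalClosure _) hu⟩, hu, rfl⟩
      rw [himg]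
      exact a.2
    have : ∀ a : RX X, evh x a = χ a := by
      intro a
      have hsub : {a : RX X | (a : C(X, ℂ)) ∈ Algebra.adjoin ℂ (rationalFunctionsOn X)} ⊆
          {a : RX X | evh x a = χ a} := fun a ha => hadj a ha
      have := closure_mono hsub (hdense a)
      rwa [hclosed.closure_eq] at this
    exact AlgHom.ext fun a => this a
  -- continuity
  have hcont : Continuous ε := by
    apply Continuous.subtype_mk
    apply WeakDual.continuous_of_continuous_eval
    intro u
    show Continuous fun a : X => (u : C(X, ℂ)) a
    exact (u : C(X, ℂ)).continuous
  exact ⟨(Continuous.homeoOfEquivCompactToT2 (f := Equiv.ofBijective ε ⟨hinj, hsurj⟩) hcont),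
    hε_apply⟩
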